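/- Assume Σ_{i∈I} θ_i α_i = 0 and θ is nondegenerate with respect to α. Then there exists a rational T₀ > 0 (depending on r, a, b, α, θ) such that for every rational T ≥ T₀ and every representation B of the preprojective algebra on an I-graded space (V_i) with dim V_i = α_i for all i: B is θ-stable if and only if the induced graded representation Ind(B) (on the I×{a,…,b}-graded space with all graded pieces V_{i,n} = V_i) is θ^gtr-stable. -/

import Mathlib

noncomputable section

open Module

/-- Cast of components of a family of `ℂ`-vector spaces along an equality of indices. -/
def lcast {I : Type} (V : I → Type) [∀ i, AddCommGroup (V i)] [∀ i, Module ℂ (V i)]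
    {i j : I} (hij : i = j) : V i ≃ₗ[ℂ] V j := by
  subst hij; exact LinearEquiv.refl ℂ (V i)

/-- `θ^lg(m) + θ^mid(m) + θ^sm(m)` for a function `m` on `I × {a,…,b}`,
where `I = {1,…,r} ∪ {∞}` is encoded as `Option (Fin r)` (`none = ∞`). -/
def thetaAux (r : ℕ) (a b : ℤ) (T : ℚ) (θ : Option (Fin r) → ℤ)
    (m : Option (Fin r) → ℤ → ℤ) : ℚ :=
  (T ^ (r + 1) * ((m none b - m none a : ℤ) : ℚ)
      + ∑ i : Fin r, T ^ ((i : ℕ) + 1) * ((m (some i) b - m (some i) a : ℤ) : ℚ))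
  + (∑ i : Option (Fin r), (θ i : ℚ) * ((m i a : ℤ) : ℚ))
  + (-(∑ i : Fin r, T ^ (-(((i : ℕ) : ℤ) + 1)) * ((m (some i) a : ℤ) : ℚ))
      + T ^ (-(r : ℤ) - 1) * ∑ i : Option (Fin r), ∑ n ∈ Finset.Ioo a b, ((m i n : ℤ) : ℚ))

/-- `θ^gtr(m) = θ^lg(m) + θ^mid(m) + θ^sm(m) − C·m_{∞,a}`. -/
def thetaGtr (r : ℕ) (a b : ℤ) (T : ℚ) (θ : Option (Fin r) → ℤ)
    (α : Option (Fin r) → ℕ) (m : Option (Fin r) → ℤ → ℤ) : ℚ :=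
  thetaAux r a b T θ m
    - thetaAux r a b T θ (fun i _ => (α i : ℤ)) * ((m none a : ℤ) : ℚ)

/-- the "small" part of `thetaAux` for a constant dimension vector `s`. -/
def smallE (r : ℕ) (a b : ℤ) (T : ℚ) (s : Option (Fin r) → ℕ) : ℚ :=
  -(∑ i : Fin r, T ^ (-(((i : ℕ) : ℤ) + 1)) * (s (some i) : ℚ))
    + T ^ (-(r : ℤ) - 1) * (((Finset.Ioo a b).card : ℚ) * ∑ i : Option (Fin r), (s i : ℚ))

lemma zpow_le_inv_self {T : ℚ} (hT1 : 1 ≤ T) {k : ℤ} (hk : k ≤ -1) : T ^ k ≤ T⁻¹ := by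
  have h0 : (0:ℚ) < T := lt_of_lt_of_le one_pos hT1
  calc T ^ k ≤ T ^ (-1 : ℤ) := zpow_le_zpow_right₀ hT1 hk
    _ = T⁻¹ := zpow_neg_one T

lemma smallE_bounds (r : ℕ) (a b : ℤ) (T : ℚ) (hT1 : 1 ≤ T)
    (α s : Option (Fin r) → ℕ) (hs : ∀ i, s i ≤ α i) :
    -(T⁻¹ * ∑ i : Option (Fin r), (α i : ℚ)) ≤ smallE r a b T s ∧
    smallE r a b T s ≤
      T⁻¹ * (((Finset.Ioo a b).card : ℚ) * ∑ i : Option (Fin r), (α i : ℚ)) := by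
  have h0 : (0:ℚ) < T := lt_of_lt_of_le one_pos hT1
  have hinv0 : (0:ℚ) ≤ T⁻¹ := by positivity
  have hP1 : ∑ i : Fin r, T ^ (-(((i : ℕ) : ℤ) + 1)) * (s (some i) : ℚ)
      ≤ T⁻¹ * ∑ i : Option (Fin r), (α i : ℚ) := by
    calc ∑ i : Fin r, T ^ (-(((i : ℕ) : ℤ) + 1)) * (s (some i) : ℚ)
        ≤ ∑ i : Fin r, T⁻¹ * (α (some i) : ℚ) := by
          refine Finset.sum_le_sum fun i _ => ?_
          refine mul_le_mul (zpow_le_inv_self hT1 (by omega)) ?_ (by positivity) hinv0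
          exact_mod_cast hs (some i)
      _ = T⁻¹ * ∑ i : Fin r, (α (some i) : ℚ) := by rw [Finset.mul_sum]
      _ ≤ T⁻¹ * ∑ i : Option (Fin r), (α i : ℚ) := by
          refine mul_le_mul_of_nonneg_left ?_ hinv0
          rw [Fintype.sum_option]
          have : (0:ℚ) ≤ (α none : ℚ) := by positivity
          linarith
  have hP2u : T ^ (-(r : ℤ) - 1) *
      (((Finset.Ioo a b).card : ℚ) * ∑ i : Option (Fin r), (s i : ℚ))
      ≤ T⁻¹ * (((Finset.Ioo a b).card : ℚ) * ∑ i : Option (Fin r), (α i : ℚ)) := by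
    refine mul_le_mul (zpow_le_inv_self hT1 (by omega)) ?_ (by positivity) hinv0
    refine mul_le_mul_of_nonneg_left ?_ (by positivity)
    refine Finset.sum_le_sum fun i _ => ?_
    exact_mod_cast hs i
  have hP1n : (0:ℚ) ≤ ∑ i : Fin r, T ^ (-(((i : ℕ) : ℤ) + 1)) * (s (some i) : ℚ) := by
    positivity
  have hP2n : (0:ℚ) ≤ T ^ (-(r : ℤ) - 1) *
      (((Finset.Ioo a b).card : ℚ) * ∑ i : Option (Fin r), (s i : ℚ)) := by positivity
  constructor
  · unfold smallE; linarith
  · unfold smallE; linarith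

lemma thetaAux_const_eq (r : ℕ) (a b : ℤ) (hab : a < b) (T : ℚ) (θ : Option (Fin r) → ℤ)
    (s : Option (Fin r) → ℕ) (m : Option (Fin r) → ℤ → ℤ)
    (hconst : ∀ i, ∀ n ∈ Finset.Icc a b, m i n = (s i : ℤ)) :
    thetaAux r a b T θ m
      = (∑ i : Option (Fin r), (θ i : ℚ) * (s i : ℚ)) + smallE r a b T s := by
  have ha : a ∈ Finset.Icc a b := by simp [le_of_lt hab]
  have hb : b ∈ Finset.Icc a b := by simp [le_of_lt hab]
  have h1 : ((m none b - m none a : ℤ) : ℚ) = 0 := by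
    rw [hconst none b hb, hconst none a ha]; simp
  have h2 : ∑ i : Fin r, T ^ ((i : ℕ) + 1) * ((m (some i) b - m (some i) a : ℤ) : ℚ) = 0 :=
    Finset.sum_eq_zero fun i _ => by
      rw [hconst (some i) b hb, hconst (some i) a ha]; simp
  have h3 : ∑ i : Option (Fin r), (θ i : ℚ) * ((m i a : ℤ) : ℚ)
      = ∑ i : Option (Fin r), (θ i : ℚ) * (s i : ℚ) :=
    Finset.sum_congr rfl fun i _ => by rw [hconst i a ha]; norm_num
  have h4 : ∑ i : Fin r, T ^ (-(((i : ℕ) : ℤ) + 1)) * ((m (some i) a : ℤ) : ℚ)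
      = ∑ i : Fin r, T ^ (-(((i : ℕ) : ℤ) + 1)) * (s (some i) : ℚ) :=
    Finset.sum_congr rfl fun i _ => by rw [hconst (some i) a ha]; norm_num
  have h5 : ∑ i : Option (Fin r), ∑ n ∈ Finset.Ioo a b, ((m i n : ℤ) : ℚ)
      = ((Finset.Ioo a b).card : ℚ) * ∑ i : Option (Fin r), (s i : ℚ) := by
    rw [Finset.mul_sum]
    refine Finset.sum_congr rfl fun i _ => ?_
    rw [Finset.sum_congr rfl fun n hn => by
      rw [hconst i n (Finset.Ioo_subset_Icc_self hn)]]
    rw [Finset.sum_const, nsmul_eq_mul]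
    norm_num
  unfold thetaAux smallE
  rw [h1, h2, h3, h4, h5]
  ring

lemma thetaAux_jump_lower (r : ℕ) (a b : ℤ) (hab : a < b) (T : ℚ) (hT1 : 1 ≤ T)
    (θ : Option (Fin r) → ℤ) (α : Option (Fin r) → ℕ) (m : Option (Fin r) → ℤ → ℤ)
    (hm0 : ∀ i, ∀ n ∈ Finset.Icc a b, 0 ≤ m i n)
    (hmα : ∀ i, ∀ n ∈ Finset.Icc a b, m i n ≤ (α i : ℤ))
    (hmono : ∀ i, m i a ≤ m i b)
    (hjump : ∃ i, m i a < m i b) :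
    T - (∑ i : Option (Fin r), |(θ i : ℚ)| * (α i : ℚ))
      - T⁻¹ * (∑ i : Option (Fin r), (α i : ℚ)) ≤ thetaAux r a b T θ m := by
  have h0 : (0:ℚ) < T := lt_of_lt_of_le one_pos hT1
  have hinv0 : (0:ℚ) ≤ T⁻¹ := by positivity
  have ha : a ∈ Finset.Icc a b := by simp [le_of_lt hab]
  have hb : b ∈ Finset.Icc a b := by simp [le_of_lt hab]
  have hd0 : ∀ i, (0:ℚ) ≤ ((m i b - m i a : ℤ) : ℚ) := fun i => by
    have := hmono i
    have : (0:ℤ) ≤ m i b - m i a := by omega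
    exact_mod_cast this
  -- lower bound for the large part
  have hL : T ≤ T ^ (r + 1) * ((m none b - m none a : ℤ) : ℚ)
      + ∑ i : Fin r, T ^ ((i : ℕ) + 1) * ((m (some i) b - m (some i) a : ℤ) : ℚ) := by
    have hterm0 : ∀ i : Fin r, (0:ℚ) ≤ T ^ ((i : ℕ) + 1) * ((m (some i) b - m (some i) a : ℤ) : ℚ) :=
      fun i => mul_nonneg (by positivity) (hd0 (some i))
    obtain ⟨j, hj⟩ := hjump
    have hj1 : (1:ℚ) ≤ ((m j b - m j a : ℤ) : ℚ) := by
      have : (1:ℤ) ≤ m j b - m j a := by omega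
      exact_mod_cast this
    cases j with
    | none =>
      have : T ≤ T ^ (r + 1) * ((m none b - m none a : ℤ) : ℚ) := by
        calc T = T * 1 := (mul_one T).symm
          _ ≤ T ^ (r + 1) * ((m none b - m none a : ℤ) : ℚ) :=
            mul_le_mul (le_self_pow₀ hT1 (by omega)) hj1 one_pos.le (by positivity)
      have hs : (0:ℚ) ≤ ∑ i : Fin r, T ^ ((i : ℕ) + 1) * ((m (some i) b - m (some i) a : ℤ) : ℚ) :=
        Finset.sum_nonneg fun i _ => hterm0 i
      linarith
    | some j =>
      have h1 : T ≤ T ^ ((j : ℕ) + 1) * ((m (some j) b - m (some j) a : ℤ) : ℚ) := by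
        calc T = T * 1 := (mul_one T).symm
          _ ≤ _ := mul_le_mul (le_self_pow₀ hT1 (by omega)) hj1 one_pos.le (by positivity)
      have h2 : T ^ ((j : ℕ) + 1) * ((m (some j) b - m (some j) a : ℤ) : ℚ)
          ≤ ∑ i : Fin r, T ^ ((i : ℕ) + 1) * ((m (some i) b - m (some i) a : ℤ) : ℚ) :=
        Finset.single_le_sum (fun i _ => hterm0 i) (Finset.mem_univ j)
      have h3 : (0:ℚ) ≤ T ^ (r + 1) * ((m none b - m none a : ℤ) : ℚ) :=
        mul_nonneg (by positivity) (hd0 none)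
      linarith
  -- lower bound for the middle part
  have hMid : -(∑ i : Option (Fin r), |(θ i : ℚ)| * (α i : ℚ))
      ≤ ∑ i : Option (Fin r), (θ i : ℚ) * ((m i a : ℤ) : ℚ) := by
    rw [← Finset.sum_neg_distrib]
    refine Finset.sum_le_sum fun i _ => ?_
    have hm0' : (0:ℚ) ≤ ((m i a : ℤ) : ℚ) := by exact_mod_cast hm0 i a ha
    have hmα' : ((m i a : ℤ) : ℚ) ≤ (α i : ℚ) := by exact_mod_cast hmα i a ha
    have := neg_abs_le ((θ i : ℚ) * ((m i a : ℤ) : ℚ))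
    have habs : |(θ i : ℚ) * ((m i a : ℤ) : ℚ)| ≤ |(θ i : ℚ)| * (α i : ℚ) := by
      rw [abs_mul, abs_of_nonneg hm0']
      exact mul_le_mul_of_nonneg_left hmα' (abs_nonneg _)
    linarith
  -- bounds for the small part
  have hP1 : ∑ i : Fin r, T ^ (-(((i : ℕ) : ℤ) + 1)) * ((m (some i) a : ℤ) : ℚ)
      ≤ T⁻¹ * ∑ i : Option (Fin r), (α i : ℚ) := by
    calc ∑ i : Fin r, T ^ (-(((i : ℕ) : ℤ) + 1)) * ((m (some i) a : ℤ) : ℚ)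
        ≤ ∑ i : Fin r, T⁻¹ * (α (some i) : ℚ) := by
          refine Finset.sum_le_sum fun i _ => ?_
          refine mul_le_mul (zpow_le_inv_self hT1 (by omega)) ?_ ?_ hinv0
          · exact_mod_cast hmα (some i) a ha
          · exact_mod_cast hm0 (some i) a ha
      _ = T⁻¹ * ∑ i : Fin r, (α (some i) : ℚ) := by rw [Finset.mul_sum]
      _ ≤ T⁻¹ * ∑ i : Option (Fin r), (α i : ℚ) := by
          refine mul_le_mul_of_nonneg_left ?_ hinv0
          rw [Fintype.sum_option]
          have : (0:ℚ) ≤ (α none : ℚ) := by positivity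
          linarith
  have hP2 : (0:ℚ) ≤ T ^ (-(r : ℤ) - 1) *
      ∑ i : Option (Fin r), ∑ n ∈ Finset.Ioo a b, ((m i n : ℤ) : ℚ) := by
    refine mul_nonneg (by positivity) ?_
    refine Finset.sum_nonneg fun i _ => Finset.sum_nonneg fun n hn => ?_
    exact_mod_cast hm0 i n (Finset.Ioo_subset_Icc_self hn)
  unfold thetaAux
  linarith

def T0val (r : ℕ) (a b : ℤ) (θ : Option (Fin r) → ℤ) (α : Option (Fin r) → ℕ) : ℚ :=
  (∑ i : Option (Fin r), |(θ i : ℚ)| * (α i : ℚ))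
    + 2 * ((∑ i : Option (Fin r), (α i : ℚ))
        + ((Finset.Ioo a b).card : ℚ) * (∑ i : Option (Fin r), (α i : ℚ))) + 1

lemma T0val_ge_one (r : ℕ) (a b : ℤ) (θ : Option (Fin r) → ℤ) (α : Option (Fin r) → ℕ) :
    1 ≤ T0val r a b θ α := by
  unfold T0val
  have h1 : (0:ℚ) ≤ ∑ i : Option (Fin r), |(θ i : ℚ)| * (α i : ℚ) := by positivity
  have h2 : (0:ℚ) ≤ ∑ i : Option (Fin r), (α i : ℚ) := by positivity
  have h3 : (0:ℚ) ≤ ((Finset.Ioo a b).card : ℚ) * (∑ i : Option (Fin r), (α i : ℚ)) := by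
    positivity
  linarith

lemma gtr_jump_pos (r : ℕ) (a b : ℤ) (hab : a < b) (T : ℚ)
    (θ : Option (Fin r) → ℤ) (α : Option (Fin r) → ℕ) (hα : α none = 1)
    (hθ0 : ∑ i : Option (Fin r), θ i * (α i : ℤ) = 0)
    (hT : T0val r a b θ α ≤ T) (m : Option (Fin r) → ℤ → ℤ)
    (hm0 : ∀ i, ∀ n ∈ Finset.Icc a b, 0 ≤ m i n)
    (hmα : ∀ i, ∀ n ∈ Finset.Icc a b, m i n ≤ (α i : ℤ))
    (hmono : ∀ i, m i a ≤ m i b)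
    (hjump : ∃ i, m i a < m i b) :
    0 < thetaGtr r a b T θ α m := by
  have hT1 : 1 ≤ T := le_trans (T0val_ge_one r a b θ α) hT
  have h0 : (0:ℚ) < T := lt_of_lt_of_le one_pos hT1
  have hinv1 : T⁻¹ ≤ 1 := by
    rw [inv_le_one_iff₀]; right; exact hT1
  have hinv0 : (0:ℚ) ≤ T⁻¹ := by positivity
  set A := ∑ i : Option (Fin r), (α i : ℚ) with hA
  set N := ((Finset.Ioo a b).card : ℚ) with hN
  set Θ := ∑ i : Option (Fin r), |(θ i : ℚ)| * (α i : ℚ) with hΘ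
  have hA0 : 0 ≤ A := by positivity
  have hN0 : 0 ≤ N := by positivity
  have hΘ0 : 0 ≤ Θ := by positivity
  have hNA0 : 0 ≤ N * A := by positivity
  -- C computation
  have hCeq : thetaAux r a b T θ (fun i _ => (α i : ℤ))
      = smallE r a b T α := by
    rw [thetaAux_const_eq r a b hab T θ α _ (fun i n _ => rfl)]
    have : ∑ i : Option (Fin r), (θ i : ℚ) * (α i : ℚ) = 0 := by exact_mod_cast hθ0
    rw [this, zero_add]
  have hC := smallE_bounds r a b T hT1 α α (fun i => le_rfl)
  have hCA : T⁻¹ * A ≤ A := by nlinarith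
  have hCNA : T⁻¹ * (N * A) ≤ N * A := by nlinarith
  have hAux := thetaAux_jump_lower r a b hab T hT1 θ α m hm0 hmα hmono hjump
  have ha : a ∈ Finset.Icc a b := by simp [le_of_lt hab]
  have hma : m none a = 0 ∨ m none a = 1 := by
    have h1 := hm0 none a ha
    have h2 := hmα none a ha
    rw [hα] at h2
    omega
  have hTbig : Θ + 2 * (A + N * A) + 1 ≤ T := le_trans (le_of_eq rfl) hT
  unfold thetaGtr
  rw [hCeq]
  rcases hma with hma | hma
  · rw [hma]
    norm_num
    linarith
  · rw [hma]
    norm_num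
    linarith

lemma gtr_const_bounds (r : ℕ) (a b : ℤ) (hab : a < b) (T : ℚ)
    (θ : Option (Fin r) → ℤ) (α : Option (Fin r) → ℕ) (hα : α none = 1)
    (hθ0 : ∑ i : Option (Fin r), θ i * (α i : ℤ) = 0)
    (hT : T0val r a b θ α ≤ T) (m : Option (Fin r) → ℤ → ℤ)
    (s : Option (Fin r) → ℕ) (hs : ∀ i, s i ≤ α i)
    (hconst : ∀ i, ∀ n ∈ Finset.Icc a b, m i n = (s i : ℤ)) :
    |thetaGtr r a b T θ α m - ∑ i : Option (Fin r), (θ i : ℚ) * (s i : ℚ)| < 1 := by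
  have hT1 : 1 ≤ T := le_trans (T0val_ge_one r a b θ α) hT
  have h0 : (0:ℚ) < T := lt_of_lt_of_le one_pos hT1
  have hinv0 : (0:ℚ) ≤ T⁻¹ := by positivity
  set A := ∑ i : Option (Fin r), (α i : ℚ) with hA
  set N := ((Finset.Ioo a b).card : ℚ) with hN
  set Θ := ∑ i : Option (Fin r), |(θ i : ℚ)| * (α i : ℚ) with hΘ
  have hA0 : 0 ≤ A := by positivity
  have hN0 : 0 ≤ N := by positivity
  have hΘ0 : 0 ≤ Θ := by positivity
  have hNA0 : 0 ≤ N * A := by positivity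
  have hCeq : thetaAux r a b T θ (fun i _ => (α i : ℤ)) = smallE r a b T α := by
    rw [thetaAux_const_eq r a b hab T θ α _ (fun i n _ => rfl)]
    have : ∑ i : Option (Fin r), (θ i : ℚ) * (α i : ℚ) = 0 := by exact_mod_cast hθ0
    rw [this, zero_add]
  have hC := smallE_bounds r a b T hT1 α α (fun i => le_rfl)
  have hE := smallE_bounds r a b T hT1 α s hs
  have ha : a ∈ Finset.Icc a b := by simp [le_of_lt hab]
  have hma : m none a = 0 ∨ m none a = 1 := by
    have h1 : (0:ℤ) ≤ (s none : ℤ) := by positivity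
    have h2 : s none ≤ 1 := hα ▸ hs none
    have h3 := hconst none a ha
    omega
  rw [← hA, ← hN] at hE hC
  have hTA : (0:ℚ) ≤ T⁻¹ * A := by positivity
  have hTNA : (0:ℚ) ≤ T⁻¹ * (N * A) := by positivity
  have hsmall : T⁻¹ * (A + N * A) < 1 := by
    have hTbig : Θ + 2 * (A + N * A) + 1 ≤ T := hT
    rw [inv_mul_eq_div, div_lt_one h0]
    linarith
  unfold thetaGtr
  rw [hCeq, thetaAux_const_eq r a b hab T θ s m hconst]
  rw [abs_lt]
  rcases hma with hma | hma
  · rw [hma]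
    norm_num
    constructor <;> [linarith [hE.1, hE.2]; linarith [hE.1, hE.2]]
  · rw [hma]
    norm_num
    constructor <;> nlinarith [hE.1, hE.2, hC.1, hC.2]

lemma chain_from' {γ : Type*} [Preorder γ] {a b : ℤ} {P : ℤ → γ}
    (hstep : ∀ n ∈ Finset.Icc a (b-1), P n ≤ P (n+1)) :
    ∀ n, a ≤ n → n ≤ b → P a ≤ P n := by
  have key : ∀ k : ℕ, ∀ n, a ≤ n → n ≤ b → n = a + k → P a ≤ P n := by
    intro k
    induction k with
    | zero => intro n _ _ h; simp at h; subst h; exact le_rfl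
    | succ k ih =>
      intro n han hnb h
      have h1 : P a ≤ P (a + k) := ih (a+k) (by omega) (by omega) rfl
      refine le_trans h1 ?_
      have h2 := hstep (a+k) (by simp; omega)
      have hn : n = (a+k) + 1 := by omega
      rw [hn]; exact h2
  intro n han hnb
  exact key (n - a).toNat n han hnb (by omega)

lemma chain_to' {γ : Type*} [Preorder γ] {a b : ℤ} {P : ℤ → γ}
    (hstep : ∀ n ∈ Finset.Icc a (b-1), P n ≤ P (n+1)) :
    ∀ n, a ≤ n → n ≤ b → P n ≤ P b := by
  have key : ∀ k : ℕ, ∀ n, a ≤ n → n + k = b → P n ≤ P b := by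
    intro k
    induction k with
    | zero => intro n _ h; simp at h; subst h; exact le_rfl
    | succ k ih =>
      intro n han h
      refine le_trans (hstep n (by simp; omega)) (ih (n+1) (by omega) (by omega))
  intro n han hnb
  exact key (b - n).toNat n han (by omega)


/-- Assume `θ(α) = 0` and `θ` nondegenerate with respect to `α`.  For `T ≫ 0`,
a representation `B` of the preprojective algebra of dimension vector `α` is `θ`-stable if and
only if the induced graded representation `Ind(B)` is `θ^gtr`-stable. -/
theorem stmt8 (r : ℕ) (a b : ℤ) (hab : a < b)
    (α : Option (Fin r) → ℕ) (hα : α none = 1)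
    (θ : Option (Fin r) → ℤ)
    (hθ0 : ∑ i : Option (Fin r), θ i * (α i : ℤ) = 0)
    (hnd : ∀ β : Option (Fin r) → ℕ, (∀ i, β i ≤ α i) →
      β ≠ 0 → β ≠ α → ∑ i : Option (Fin r), θ i * (β i : ℤ) ≠ 0) :
    ∃ T₀ : ℚ, 0 < T₀ ∧ ∀ T : ℚ, T₀ ≤ T →
    ∀ (H : Type) (_ : Fintype H) (s t : H → Option (Fin r)) (bar : H → H)
      (bar_invol : ∀ h, bar (bar h) = h), (∀ h, bar h ≠ h) →
    ∀ (s_bar : ∀ h, s (bar h) = t h) (t_bar : ∀ h, t (bar h) = s h)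
      (eps : H → ℤ), (∀ h, eps h = 1 ∨ eps h = -1) → (∀ h, eps (bar h) = - eps h) →
    ∀ (V : Option (Fin r) → Type)
      (_ : ∀ i, AddCommGroup (V i)),
      ∀ (_ : ∀ i, Module ℂ (V i)) (_ : ∀ i, FiniteDimensional ℂ (V i)),
      (∀ i, finrank ℂ (V i) = α i) →
      ∀ B : ∀ h, V (s h) →ₗ[ℂ] V (t h),
      -- B satisfies the preprojective relation
      (∀ k, (∑ h : H, if hk : s h = k then
          (eps h : ℂ) • ((lcast V ((t_bar h).trans hk)).toLinearMap ∘ₗ B (bar h)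
            ∘ₗ (lcast V (s_bar h)).symm.toLinearMap ∘ₗ B h
            ∘ₗ (lcast V hk).symm.toLinearMap) else 0) = 0) →
      -- B is θ-stable ↔ Ind(B) is θ^gtr-stable
      ((∀ S : ∀ i, Submodule ℂ (V i),
          (∀ h, (S (s h)).map (B h) ≤ S (t h)) →
          (∃ i, S i ≠ ⊥) → (∃ i, S i ≠ ⊤) →
          0 < ∑ i : Option (Fin r), (θ i : ℚ) * (finrank ℂ (S i) : ℚ))
        ↔
        (∀ M : ∀ (i : Option (Fin r)), ℤ → Submodule ℂ (V i),
          (∀ h, ∀ n ∈ Finset.Icc a (b - 1), (M (s h) n).map (B h) ≤ M (t h) (n + 1)) →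
          (∀ i, ∀ n ∈ Finset.Icc a (b - 1), M i n ≤ M i (n + 1)) →
          (∃ i, ∃ n ∈ Finset.Icc a b, M i n ≠ ⊥) →
          (∃ i, ∃ n ∈ Finset.Icc a b, M i n ≠ ⊤) →
          0 < thetaGtr r a b T θ α (fun i n => (finrank ℂ (M i n) : ℤ)))) := by
  refine ⟨T0val r a b θ α, lt_of_lt_of_le one_pos (T0val_ge_one r a b θ α), ?_⟩
  intro T hT H _ s t bar _ _ _ _ eps _ _ V _ _ _ hdim B _
  have ha : a ∈ Finset.Icc a b := by simp [le_of_lt hab]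
  have hb : b ∈ Finset.Icc a b := by simp [le_of_lt hab]
  have ha' : a ∈ Finset.Icc a (b-1) := by simp; omega
  constructor
  · -- B stable → graded stable
    intro hstab M harrow hmono hne hnt
    have hm0 : ∀ i, ∀ n ∈ Finset.Icc a b, (0:ℤ) ≤ (finrank ℂ (M i n) : ℤ) :=
      fun i n _ => by positivity
    have hmα : ∀ i, ∀ n ∈ Finset.Icc a b, (finrank ℂ (M i n) : ℤ) ≤ (α i : ℤ) := by
      intro i n _
      have h1 : finrank ℂ (M i n) ≤ finrank ℂ (V i) := Submodule.finrank_le _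
      rw [hdim i] at h1
      exact_mod_cast h1
    have hle : ∀ i, ∀ n ∈ Finset.Icc a b, M i a ≤ M i n := by
      intro i n hn
      rw [Finset.mem_Icc] at hn
      exact chain_from' (hmono i) n hn.1 hn.2
    have hub : ∀ i, ∀ n ∈ Finset.Icc a b, M i n ≤ M i b := by
      intro i n hn
      rw [Finset.mem_Icc] at hn
      exact chain_to' (hmono i) n hn.1 hn.2
    have hmono2 : ∀ i, (finrank ℂ (M i a) : ℤ) ≤ (finrank ℂ (M i b) : ℤ) := by
      intro i; exact_mod_cast Submodule.finrank_mono (hle i b hb)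
    by_cases hj : ∃ i, (finrank ℂ (M i a) : ℤ) < (finrank ℂ (M i b) : ℤ)
    · exact gtr_jump_pos r a b hab T θ α hα hθ0 hT _ hm0 hmα hmono2 hj
    · push_neg at hj
      have hconstM : ∀ i, ∀ n ∈ Finset.Icc a b, M i n = M i a := by
        intro i n hn
        refine (Submodule.eq_of_le_of_finrank_le (hle i n hn) ?_).symm
        have h1 : finrank ℂ (M i n) ≤ finrank ℂ (M i b) := Submodule.finrank_mono (hub i n hn)
        have h2 : (finrank ℂ (M i b) : ℤ) ≤ (finrank ℂ (M i a) : ℤ) := hj i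
        omega
      have hstep : ∀ h, ((fun i => M i a) (s h)).map (B h) ≤ (fun i => M i a) (t h) := by
        intro h
        have h1 := harrow h a ha'
        have h2 : M (t h) (a+1) = M (t h) a := hconstM (t h) (a+1) (by simp; omega)
        rw [h2] at h1
        exact h1
      have hSne : ∃ i, (fun i => M i a) i ≠ ⊥ := by
        obtain ⟨i, n, hn, hni⟩ := hne
        exact ⟨i, fun hbot => hni (by rw [hconstM i n hn]; exact hbot)⟩
      have hSnt : ∃ i, (fun i => M i a) i ≠ ⊤ := by
        obtain ⟨i, n, hn, hni⟩ := hnt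
        exact ⟨i, fun htop => hni (by rw [hconstM i n hn]; exact htop)⟩
      have hpos := hstab (fun i => M i a) hstep hSne hSnt
      have hint : (1:ℤ) ≤ ∑ i : Option (Fin r), θ i * (finrank ℂ (M i a) : ℤ) := by
        have hq : (0:ℚ) < ((∑ i : Option (Fin r), θ i * (finrank ℂ (M i a) : ℤ) : ℤ) : ℚ) := by
          push_cast
          exact hpos
        have : (0:ℤ) < ∑ i : Option (Fin r), θ i * (finrank ℂ (M i a) : ℤ) := by
          exact_mod_cast hq
        omega
      have hcb := gtr_const_bounds r a b hab T θ α hα hθ0 hT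
        (fun i n => (finrank ℂ (M i n) : ℤ)) (fun i => finrank ℂ (M i a))
        (fun i => by rw [← hdim i]; exact Submodule.finrank_le _)
        (fun i n hn => by rw [hconstM i n hn])
      have habs := abs_lt.mp hcb
      have hq1 : (1:ℚ) ≤ ∑ i : Option (Fin r), (θ i : ℚ) * ((finrank ℂ (M i a) : ℕ) : ℚ) := by
        have h2 : ((1:ℤ):ℚ) ≤ ((∑ i : Option (Fin r), θ i * (finrank ℂ (M i a) : ℤ) : ℤ) : ℚ) :=
          Int.cast_le.mpr hint
        push_cast at h2
        linarith
      linarith [habs.1, habs.2, hq1]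
  · -- graded stable → B stable
    intro hgr S hsub hne hnt
    have hgoal : 0 < thetaGtr r a b T θ α (fun i n => (finrank ℂ (S i) : ℤ)) := by
      have := hgr (fun i _ => S i)
        (fun h n _ => hsub h)
        (fun i n _ => le_rfl)
        (by obtain ⟨i, hi⟩ := hne; exact ⟨i, a, ha, hi⟩)
        (by obtain ⟨i, hi⟩ := hnt; exact ⟨i, a, ha, hi⟩)
      exact this
    have hcb := gtr_const_bounds r a b hab T θ α hα hθ0 hT
      (fun i n => (finrank ℂ (S i) : ℤ)) (fun i => finrank ℂ (S i))
      (fun i => by rw [← hdim i]; exact Submodule.finrank_le _)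
      (fun i n _ => rfl)
    have habs := abs_lt.mp hcb
    -- the integer pairing is > -1, hence ≥ 0, hence (nondegeneracy) ≥ 1
    have hgm1 : (-1 : ℚ) < ∑ i : Option (Fin r), (θ i : ℚ) * ((finrank ℂ (S i) : ℕ) : ℚ) := by
      linarith [habs.1, habs.2]
    have hZ : (0:ℤ) ≤ ∑ i : Option (Fin r), θ i * (finrank ℂ (S i) : ℤ) := by
      by_contra hneg
      push_neg at hneg
      have : ((∑ i : Option (Fin r), θ i * (finrank ℂ (S i) : ℤ) : ℤ) : ℚ) ≤ -1 := by
        exact_mod_cast Int.le_of_lt_add_one (by omega : (∑ i : Option (Fin r), θ i * (finrank ℂ (S i) : ℤ)) < -1 + 1)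
      push_cast at this
      linarith
    have hZne : ∑ i : Option (Fin r), θ i * (finrank ℂ (S i) : ℤ) ≠ 0 := by
      refine hnd (fun i => finrank ℂ (S i)) (fun i => by rw [← hdim i]; exact Submodule.finrank_le _) ?_ ?_
      · obtain ⟨i, hi⟩ := hne
        intro hzero
        have : finrank ℂ (S i) = 0 := congrFun hzero i
        exact hi (Submodule.finrank_eq_zero.mp this)
      · obtain ⟨i, hi⟩ := hnt
        intro heq
        have h1 : finrank ℂ (S i) = α i := congrFun heq i
        exact hi (Submodule.eq_top_of_finrank_eq (by rw [h1, hdim i]))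
    have hZ1 : (1:ℤ) ≤ ∑ i : Option (Fin r), θ i * (finrank ℂ (S i) : ℤ) := by omega
    have : (1:ℚ) ≤ ∑ i : Option (Fin r), (θ i : ℚ) * ((finrank ℂ (S i) : ℕ) : ℚ) := by
      have h2 : ((1:ℤ):ℚ) ≤ ((∑ i : Option (Fin r), θ i * (finrank ℂ (S i) : ℤ) : ℤ) : ℚ) :=
        Int.cast_le.mpr hZ1
      push_cast at h2
      linarith
    linarith
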